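/- Let N ≥ 1 and let ρ be a separable state on ℋ_A ⊗ ℋ_B. Then there exists an operator σ ∈ 𝒮̃^N with tr σ = 1 such that ‖ρ − σ‖₁ ≤ 2(d−1)/(N+d). (Concretely, σ = (N/(N+d)) ρ + (1/(N+d)) ρ_A ⊗ 𝕀_B works, where ρ_A = tr_B ρ.) -/

import Mathlib

open Matrix MeasureTheory
open scoped Kronecker BigOperators ENNReal ComplexOrder

noncomputable section

namespace SepPaper

/-- The rank-one operator `|ψ⟩⟨ψ|`. -/
def proj {n : Type*} (ψ : n → ℂ) : Matrix n n ℂ := Matrix.vecMulVec ψ (star ψ)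

/-- `Λ` is a separable operator on `ℂ^{dA} ⊗ ℂ^{d}`: a finite conical combination of
pure product operators `|ψ⟩⟨ψ| ⊗ |φ⟩⟨φ|`. -/
def IsSeparable (dA d : ℕ) (Λ : Matrix (Fin dA × Fin d) (Fin dA × Fin d) ℂ) : Prop :=
  ∃ (k : ℕ) (c : Fin k → ℝ) (ψ : Fin k → (Fin dA → ℂ)) (φ : Fin k → (Fin d → ℂ)),
    (∀ i, 0 ≤ c i) ∧
    Λ = ∑ i, (c i : ℂ) • (proj (ψ i) ⊗ₖ proj (φ i))

/-- Partial trace over the `B` system. -/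
def trB {dA d : ℕ} (M : Matrix (Fin dA × Fin d) (Fin dA × Fin d) ℂ) :
    Matrix (Fin dA) (Fin dA) ℂ :=
  fun a a' => ∑ b : Fin d, M (a, b) (a', b)

/-- Index type of `ℋ_A ⊗ ℋ_B ⊗ ℋ_B^{⊗(N-1)} = ℋ_A ⊗ ℋ_B^{⊗N}` (for `N ≥ 1`). -/
abbrev ExtIdx (dA d N : ℕ) := Fin dA × Fin d × (Fin (N - 1) → Fin d)

/-- The orthogonal projector onto the symmetric subspace of `(ℂ^d)^{⊗N}`,
realized as the average of all permutation operators. -/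
def symProj (d N : ℕ) : Matrix (Fin N → Fin d) (Fin N → Fin d) ℂ :=
  (N.factorial : ℂ)⁻¹ •
    ∑ π : Equiv.Perm (Fin N), Matrix.of (fun f g => if (fun i => g (π i)) = f then (1 : ℂ) else 0)

/-- Identification of `ℂ^d ⊗ (ℂ^d)^{⊗(N-1)}` with `(ℂ^d)^{⊗((N-1)+1)}`. -/
def bEquiv (d N : ℕ) : (Fin d × (Fin (N - 1) → Fin d)) ≃ (Fin (N - 1 + 1) → Fin d) :=
  Fin.consEquiv (fun _ => Fin d)

/-- The symmetric projector on the `N = (N-1)+1` copies of `ℂ^d`,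
viewed on the index type `Fin d × (Fin (N-1) → Fin d)`. -/
def symProjB (d N : ℕ) : Matrix (Fin d × (Fin (N - 1) → Fin d)) (Fin d × (Fin (N - 1) → Fin d)) ℂ :=
  Matrix.reindex (bEquiv d N).symm (bEquiv d N).symm (symProj d (N - 1 + 1))

/-- Partial trace over the last `N-1` copies of `ℋ_B`. -/
def ptraceExt {dA d N : ℕ} (M : Matrix (ExtIdx dA d N) (ExtIdx dA d N) ℂ) :
    Matrix (Fin dA × Fin d) (Fin dA × Fin d) ℂ :=
  fun p q => ∑ g : Fin (N - 1) → Fin d, M (p.1, p.2, g) (q.1, q.2, g)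

/-- Membership in `𝒮^N`: existence of a positive semidefinite Bose-symmetric
`N`-extension. -/
def MemSN (dA d N : ℕ) (Λ : Matrix (Fin dA × Fin d) (Fin dA × Fin d) ℂ) : Prop :=
  ∃ Λext : Matrix (ExtIdx dA d N) (ExtIdx dA d N) ℂ,
    Λext.PosSemidef ∧ ptraceExt Λext = Λ ∧
    Λext * ((1 : Matrix (Fin dA) (Fin dA) ℂ) ⊗ₖ symProjB d N) = Λext

/-- Partial transpose of an operator on `ℋ_A ⊗ ℋ_B^{⊗N}` w.r.t. the bipartition
`(A and the first ⌈N/2⌉ copies of B) | (the last ⌊N/2⌋ copies of B)`.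
Copy `0` of `B` is the explicit factor and the extra copy `i : Fin (N-1)` is copy
`i+1`; copy `j` is transposed iff `⌈N/2⌉ = (N+1)/2 ≤ j`. -/
def pt {dA d N : ℕ} (M : Matrix (ExtIdx dA d N) (ExtIdx dA d N) ℂ) :
    Matrix (ExtIdx dA d N) (ExtIdx dA d N) ℂ :=
  fun p q =>
    M (p.1, p.2.1, fun i => if (N + 1) / 2 ≤ (i : ℕ) + 1 then q.2.2 i else p.2.2 i)
      (q.1, q.2.1, fun i => if (N + 1) / 2 ≤ (i : ℕ) + 1 then p.2.2 i else q.2.2 i)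

/-- Membership in `𝒮_p^N`: existence of a positive semidefinite Bose-symmetric
`N`-extension which is moreover PPT w.r.t. the bipartition
`A B^{⌈N/2⌉} | B^{⌊N/2⌋}`. -/
def MemSNp (dA d N : ℕ) (Λ : Matrix (Fin dA × Fin d) (Fin dA × Fin d) ℂ) : Prop :=
  ∃ Λext : Matrix (ExtIdx dA d N) (ExtIdx dA d N) ℂ,
    Λext.PosSemidef ∧ ptraceExt Λext = Λ ∧
    Λext * ((1 : Matrix (Fin dA) (Fin dA) ℂ) ⊗ₖ symProjB d N) = Λext ∧
    (pt Λext).PosSemidef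

/-- Membership in `𝒮̃^N = {(N/(N+d)) σ + (1/(N+d)) σ_A ⊗ 𝕀_B : σ ∈ 𝒮^N}`. -/
def MemStildeN (dA d N : ℕ) (Λ : Matrix (Fin dA × Fin d) (Fin dA × Fin d) ℂ) : Prop :=
  ∃ σ, MemSN dA d N σ ∧
    Λ = ((N : ℂ) / ((N : ℂ) + d)) • σ +
        (1 / ((N : ℂ) + d)) • (trB σ ⊗ₖ (1 : Matrix (Fin d) (Fin d) ℂ))

/-- The Jacobi polynomial `P_n^{(α,β)}` (for natural parameters `α, β`). -/
def jacobiP (n α β : ℕ) (x : ℝ) : ℝ :=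
  ∑ s ∈ Finset.range (n + 1),
    (Nat.choose (n + α) (n - s) : ℝ) * (Nat.choose (n + β) s : ℝ) *
      ((x - 1) / 2) ^ s * ((x + 1) / 2) ^ (n - s)

/-- `ε_N = (d/(2(d-1))) · min {1 - x : P_{⌊N/2⌋+1}^{(d-2, N mod 2)}(x) = 0}`. -/
def epsN (d N : ℕ) : ℝ :=
  ((d : ℝ) / (2 * ((d : ℝ) - 1))) *
    sInf {y : ℝ | ∃ x : ℝ, y = 1 - x ∧ jacobiP (N / 2 + 1) (d - 2) (N % 2) x = 0}

/-- Membership in `𝒮̃_p^N = {(1-ε_N) σ + ε_N σ_A ⊗ 𝕀_B/d : σ ∈ 𝒮_p^N}`. -/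
def MemStildeNp (dA d N : ℕ) (Λ : Matrix (Fin dA × Fin d) (Fin dA × Fin d) ℂ) : Prop :=
  ∃ σ, MemSNp dA d N σ ∧
    Λ = ((1 : ℂ) - (epsN d N : ℂ)) • σ +
        ((epsN d N : ℂ) / d) • (trB σ ⊗ₖ (1 : Matrix (Fin d) (Fin d) ℂ))

/-- The trace norm `‖Z‖₁ = tr √(Z Zᴴ)`. -/
def traceNorm {n : Type*} [Fintype n] [DecidableEq n] (Z : Matrix n n ℂ) : ℝ :=
  (((Matrix.posSemidef_self_mul_conjTranspose Z).1.eigenvectorUnitary : Matrix n n ℂ) *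
      Matrix.diagonal (((↑) : ℝ → ℂ) ∘ (√·) ∘ (Matrix.posSemidef_self_mul_conjTranspose Z).1.eigenvalues) *
      (star (Matrix.posSemidef_self_mul_conjTranspose Z).1.eigenvectorUnitary : Matrix n n ℂ)).trace.re

/-- The operator norm `‖Z‖_∞` (largest singular value), as the norm of the induced
operator on Euclidean space. -/
def opNorm {n : Type*} [Fintype n] [DecidableEq n] (Z : Matrix n n ℂ) : ℝ :=
  ‖LinearMap.toContinuousLinearMap (Matrix.toEuclideanLin Z)‖

/-- `(|φ⟩⟨φ|)^{⊗N}` on `ℋ_B^{⊗N} = ℋ_B ⊗ ℋ_B^{⊗(N-1)}`. -/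
def projPowExt {d : ℕ} (N : ℕ) (φ : Fin d → ℂ) :
    Matrix (Fin d × (Fin (N - 1) → Fin d)) (Fin d × (Fin (N - 1) → Fin d)) ℂ :=
  fun p q => proj φ p.1 q.1 * ∏ i, proj φ (p.2 i) (q.2 i)

/-- The optimal fidelity `F = sup {tr(ρ Λ) : Λ ∈ 𝒮, tr_B Λ = 𝕀_A}`. -/
def fid (dA d : ℕ) (ρ : Matrix (Fin dA × Fin d) (Fin dA × Fin d) ℂ) : ℝ :=
  sSup {r : ℝ | ∃ Λ, IsSeparable dA d Λ ∧ trB Λ = 1 ∧ r = ((ρ * Λ).trace).re}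

/-- `F̃^N = sup {tr(ρ Λ) : Λ ∈ 𝒮̃^N, tr_B Λ = 𝕀_A}`. -/
def fidTildeN (dA d N : ℕ) (ρ : Matrix (Fin dA × Fin d) (Fin dA × Fin d) ℂ) : ℝ :=
  sSup {r : ℝ | ∃ Λ, MemStildeN dA d N Λ ∧ trB Λ = 1 ∧ r = ((ρ * Λ).trace).re}

/-- `F̃_p^N = sup {tr(ρ Λ) : Λ ∈ 𝒮̃_p^N, tr_B Λ = 𝕀_A}`. -/
def fidTildeNp (dA d N : ℕ) (ρ : Matrix (Fin dA × Fin d) (Fin dA × Fin d) ℂ) : ℝ :=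
  sSup {r : ℝ | ∃ Λ, MemStildeNp dA d N Λ ∧ trB Λ = 1 ∧ r = ((ρ * Λ).trace).re}

/-- Robustness relative to a set `T` of operators:
`R_T(ρ) = inf {tr σ : σ ∈ T, ρ + σ ∈ T}` (with `inf ∅ = +∞`). -/
def rob {dA d : ℕ} (T : Set (Matrix (Fin dA × Fin d) (Fin dA × Fin d) ℂ))
    (ρ : Matrix (Fin dA × Fin d) (Fin dA × Fin d) ℂ) : ℝ≥0∞ :=
  sInf {t : ℝ≥0∞ | ∃ σ ∈ T, ρ + σ ∈ T ∧ t = ENNReal.ofReal ((σ.trace).re)}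


lemma psd_diag_re_nonneg {n : Type*} [Fintype n] [DecidableEq n] {M : Matrix n n ℂ}
    (hM : M.PosSemidef) (i : n) : 0 ≤ (M i i).re := by
  have h2 : (0:ℂ) ≤ M i i := hM.diag_nonneg
  simpa using (Complex.le_def.mp h2).1

lemma traceNorm_le_of_psd_add {n : Type*} [Fintype n] [DecidableEq n]
    (Z Q : Matrix n n ℂ) (hZ : Z.IsHermitian) (hQ : Q.PosSemidef)
    (hZQ : (Z + Q).PosSemidef) :
    traceNorm Z ≤ (Z.trace).re + 2 * (Q.trace).re := by
  classical
  set U : Matrix n n ℂ := (hZ.eigenvectorUnitary : Matrix n n ℂ) with hU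
  have hUU : U * star U = 1 := (Matrix.mem_unitaryGroup_iff).mp hZ.eigenvectorUnitary.2
  have hUU' : star U * U = 1 := (Matrix.mem_unitaryGroup_iff').mp hZ.eigenvectorUnitary.2
  have hcancel : ∀ X : Matrix n n ℂ, star U * (U * X) = X := fun X => by
    rw [← Matrix.mul_assoc, hUU', Matrix.one_mul]
  set lam := hZ.eigenvalues with hlam
  set D : Matrix n n ℂ := Matrix.diagonal (fun i => ((|lam i| : ℝ) : ℂ)) with hD
  set Dl : Matrix n n ℂ := Matrix.diagonal (RCLike.ofReal ∘ lam) with hDl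
  have hspec : Z = U * Dl * star U := hZ.spectral_theorem
  -- candidate square root of Z Zᴴ
  set S : Matrix n n ℂ := U * D * star U with hS
  have hDpsd : D.PosSemidef := by
    rw [hD, Matrix.posSemidef_diagonal_iff]
    intro i
    rw [Complex.zero_le_real]
    exact abs_nonneg _
  have hSpsd : S.PosSemidef := by
    simpa [hS, Matrix.mul_assoc, Matrix.star_eq_conjTranspose] using hDpsd.mul_mul_conjTranspose_same U
  have hDD : D * D = Dl * Dl := by
    rw [hD, hDl, Matrix.diagonal_mul_diagonal, Matrix.diagonal_mul_diagonal]
    congr 1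
    ext i
    simp only [Function.comp_apply, RCLike.ofReal_alg, Complex.real_smul, mul_one,
      ← Complex.ofReal_mul, abs_mul_abs_self]
  have hsq : S ^ 2 = Z * Zᴴ := by
    rw [pow_two, hZ.eq, hspec, hS]
    simp only [Matrix.mul_assoc]
    rw [hcancel, hcancel, ← Matrix.mul_assoc D, ← Matrix.mul_assoc Dl, hDD]
  have htrS : traceNorm Z = ∑ i, |lam i| := by
    have hZZ := (Matrix.posSemidef_self_mul_conjTranspose Z).1
    rw [traceNorm, show ((hZZ.eigenvectorUnitary : Matrix n n ℂ) *
      Matrix.diagonal (((↑) : ℝ → ℂ) ∘ (√·) ∘ hZZ.eigenvalues) *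
      (star hZZ.eigenvectorUnitary : Matrix n n ℂ)) = hZZ.cfc Real.sqrt from rfl,
      ← hZZ.cfc_eq, hZ.eq, ← pow_two, show cfc Real.sqrt (Z ^ 2) = cfc (fun x => Real.sqrt (x ^ 2)) Z
        from (cfc_comp_pow Real.sqrt 2 Z (ha := hZ)).symm]
    simp_rw [Real.sqrt_sq_eq_abs]
    rw [hZ.cfc_eq, Matrix.IsHermitian.cfc, Unitary.conjStarAlgAut_apply, Matrix.trace_mul_cycle,
      Unitary.coe_star_mul_self, Matrix.one_mul, Matrix.trace_diagonal]
    push_cast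
    simp [hlam]
  -- diagonal entries of conjugated matrices
  set q : n → ℝ := fun i => ((star U * Q * U) i i).re with hq
  have hQU : (star U * Q * U).PosSemidef := by
    simpa [Matrix.star_eq_conjTranspose] using hQ.conjTranspose_mul_mul_same U
  have hqnn : ∀ i, 0 ≤ q i := fun i => psd_diag_re_nonneg hQU i
  have hZQU : (star U * (Z + Q) * U).PosSemidef := by
    simpa [Matrix.star_eq_conjTranspose] using hZQ.conjTranspose_mul_mul_same U
  have hdiagZ : star U * Z * U = Dl := by
    rw [hspec]; simp only [Matrix.mul_assoc]; rw [hcancel, hUU', Matrix.mul_one]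
  have hlq : ∀ i, 0 ≤ lam i + q i := by
    intro i
    have := psd_diag_re_nonneg hZQU i
    have hsplit : star U * (Z + Q) * U = Dl + star U * Q * U := by
      rw [← hdiagZ]; noncomm_ring
    rw [hsplit] at this
    simpa [hDl, Matrix.diagonal_apply_eq] using this
  have habs : ∀ i, |lam i| ≤ lam i + 2 * q i := by
    intro i
    rcases abs_cases (lam i) with ⟨h1, _⟩ | ⟨h1, _⟩
    · rw [h1]; linarith [hqnn i]
    · rw [h1]; linarith [hlq i]
  have htrQ : ∑ i, q i = (Q.trace).re := by
    have : (star U * Q * U).trace = Q.trace := by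
      rw [Matrix.trace_mul_cycle, hUU, Matrix.one_mul]
    calc ∑ i, q i = ((star U * Q * U).trace).re := by
          rw [Matrix.trace]; simp [hq, Matrix.diag]
      _ = (Q.trace).re := by rw [this]
  have htrZ : ∑ i, lam i = (Z.trace).re := by
    have : Z.trace = Dl.trace := by
      rw [hspec, Matrix.trace_mul_cycle, hUU', Matrix.one_mul]
    rw [this, hDl, Matrix.trace_diagonal]
    push_cast
    simp
  calc traceNorm Z = ∑ i, |lam i| := htrS
    _ ≤ ∑ i, (lam i + 2 * q i) := Finset.sum_le_sum fun i _ => habs i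
    _ = (∑ i, lam i) + 2 * ∑ i, q i := by rw [Finset.sum_add_distrib, Finset.mul_sum]
    _ = (Z.trace).re + 2 * (Q.trace).re := by rw [htrZ, htrQ]


lemma proj_apply {n : Type*} (ψ : n → ℂ) (i j : n) :
    proj ψ i j = ψ i * (starRingEnd ℂ) (ψ j) := rfl

lemma kron_conjTranspose {m p : Type*} (A : Matrix m m ℂ) (B : Matrix p p ℂ) :
    (A ⊗ₖ B)ᴴ = Aᴴ ⊗ₖ Bᴴ := by
  ext ⟨i, j⟩ ⟨k, l⟩
  simp [Matrix.conjTranspose_apply, Matrix.kroneckerMap_apply]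

lemma posSemidef_kronecker {m p : Type*} [Fintype m] [Fintype p] [DecidableEq m] [DecidableEq p]
    {A : Matrix m m ℂ} {B : Matrix p p ℂ} (hA : A.PosSemidef) (hB : B.PosSemidef) :
    (A ⊗ₖ B).PosSemidef := by
  exact hA.kronecker hB

lemma posSemidef_smul_real {n : Type*} [Fintype n] {A : Matrix n n ℂ}
    (hA : A.PosSemidef) {c : ℝ} (hc : 0 ≤ c) : ((c : ℂ) • A).PosSemidef := by
  refine Matrix.PosSemidef.of_dotProduct_mulVec_nonneg ?_ ?_
  · rw [Matrix.IsHermitian, Matrix.conjTranspose_smul, hA.1.eq]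
    congr 1
    simp [Complex.conj_ofReal]
  · intro x
    rw [Matrix.smul_mulVec, dotProduct_smul, smul_eq_mul]
    exact mul_nonneg (Complex.zero_le_real.mpr hc) (hA.dotProduct_mulVec_nonneg x)

lemma proj_posSemidef {n : Type*} [Fintype n] [DecidableEq n] (ψ : n → ℂ) :
    (proj ψ).PosSemidef := by
  have h : proj ψ = Matrix.replicateCol Unit ψ * (Matrix.replicateCol Unit ψ)ᴴ := by
    ext i j
    simp [proj, Matrix.vecMulVec, Matrix.mul_apply, Matrix.conjTranspose_apply, Matrix.replicateCol]
  rw [h]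
  exact Matrix.posSemidef_self_mul_conjTranspose _

/-- `t • 1 - proj φ` is PSD where `t = ‖φ‖²`. -/
lemma sub_proj_posSemidef {d : ℕ} (φ : Fin d → ℂ) :
    (((∑ b, Complex.normSq (φ b) : ℝ) : ℂ) • (1 : Matrix (Fin d) (Fin d) ℂ)
      - proj φ).PosSemidef := by
  set t : ℝ := ∑ b, Complex.normSq (φ b) with ht
  refine Matrix.PosSemidef.of_dotProduct_mulVec_nonneg ?_ ?_
  · have h1 : ((t : ℂ) • (1 : Matrix (Fin d) (Fin d) ℂ)).IsHermitian := by
      rw [Matrix.IsHermitian, Matrix.conjTranspose_smul, Matrix.conjTranspose_one]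
      congr 1
      simp [Complex.conj_ofReal]
    exact h1.sub (proj_posSemidef φ).1
  · intro x
    have hmv : ∀ b, ((proj φ) *ᵥ x) b = φ b * ((star φ) ⬝ᵥ x) := by
      intro b
      simp [proj, Matrix.mulVec, Matrix.vecMulVec, dotProduct, Finset.mul_sum, mul_assoc]
    have hQF : dotProduct (star x) ((proj φ) *ᵥ x) =
        (Complex.normSq ((star φ) ⬝ᵥ x) : ℂ) := by
      have e1 : dotProduct (star x) ((proj φ) *ᵥ x)
          = (∑ b, star (x b) * φ b) * ((star φ) ⬝ᵥ x) := by
        rw [dotProduct, Finset.sum_mul]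
        refine Finset.sum_congr rfl fun b _ => ?_
        rw [hmv b, Pi.star_apply]; ring
      have e2 : (∑ b, star (x b) * φ b) = (starRingEnd ℂ) ((star φ) ⬝ᵥ x) := by
        rw [dotProduct, map_sum]
        refine Finset.sum_congr rfl fun b _ => ?_
        simp [mul_comm]
      rw [e1, e2, ← Complex.normSq_eq_conj_mul_self]
    have hIx : dotProduct (star x) (((t : ℂ) • (1 : Matrix (Fin d) (Fin d) ℂ)) *ᵥ x)
        = (t : ℂ) * ((∑ b, Complex.normSq (x b) : ℝ) : ℂ) := by
      rw [Matrix.smul_mulVec, dotProduct_smul, Matrix.one_mulVec, smul_eq_mul]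
      congr 1
      rw [dotProduct]
      push_cast
      congr 1; ext b
      simp [Complex.normSq_eq_conj_mul_self]
    rw [Matrix.sub_mulVec, dotProduct_sub, hQF, hIx]
    have key : Complex.normSq ((star φ) ⬝ᵥ x) ≤ t * ∑ b, Complex.normSq (x b) := by
      have h1 : ‖(star φ) ⬝ᵥ x‖ ≤ ∑ b, ‖φ b‖ * ‖x b‖ := by
        refine (norm_sum_le _ _).trans ?_
        refine le_of_eq (Finset.sum_congr rfl fun b _ => ?_)
        rw [Pi.star_apply, norm_mul]
        simp [RCLike.star_def]
      have h2 : (∑ b, ‖φ b‖ * ‖x b‖) ^ 2 ≤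
          (∑ b, ‖φ b‖ ^ 2) * ∑ b, ‖x b‖ ^ 2 :=
        Finset.sum_mul_sq_le_sq_mul_sq _ _ _
      have h3 : Complex.normSq ((star φ) ⬝ᵥ x) = ‖(star φ) ⬝ᵥ x‖ ^ 2 :=
        (Complex.sq_norm _).symm
      rw [h3, ht]
      calc ‖(star φ) ⬝ᵥ x‖ ^ 2
          ≤ (∑ b, ‖φ b‖ * ‖x b‖) ^ 2 := by
            apply pow_le_pow_left₀ (norm_nonneg _) h1 2
        _ ≤ (∑ b, ‖φ b‖ ^ 2) * ∑ b, ‖x b‖ ^ 2 := h2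
        _ = (∑ b, Complex.normSq (φ b)) * ∑ b, Complex.normSq (x b) := by
            simp [Complex.sq_norm]
    rw [← Complex.ofReal_mul, sub_nonneg]
    exact_mod_cast Complex.real_le_real.mpr key


lemma posSemidef_sum {n ι : Type*} [Fintype n] (s : Finset ι) (f : ι → Matrix n n ℂ)
    (h : ∀ i ∈ s, (f i).PosSemidef) : (∑ i ∈ s, f i).PosSemidef := by
  classical
  induction s using Finset.induction_on with
  | empty => simpa using Matrix.PosSemidef.zero
  | insert _ _ hx ih =>
    rw [Finset.sum_insert hx]
    exact ((h _ (Finset.mem_insert_self _ _)).add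
      (ih fun i hi => h i (Finset.mem_insert_of_mem hi)))

variable {dA d N : ℕ}

lemma trB_decomp (k : ℕ) (c : Fin k → ℝ) (ψ : Fin k → (Fin dA → ℂ))
    (φ : Fin k → (Fin d → ℂ)) :
    trB (∑ i, (c i : ℂ) • (proj (ψ i) ⊗ₖ proj (φ i))) =
      ∑ i, (c i : ℂ) • ((∑ b, Complex.normSq (φ i b) : ℝ) : ℂ) • proj (ψ i) := by
  ext a a'
  simp only [trB, Matrix.sum_apply, Matrix.smul_apply, Matrix.kroneckerMap_apply, smul_eq_mul]
  rw [Finset.sum_comm]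
  refine Finset.sum_congr rfl fun i _ => ?_
  simp only [← Finset.mul_sum]
  rw [
    show ∑ b, proj (φ i) b b = ((∑ b, Complex.normSq (φ i b) : ℝ) : ℂ) by
      push_cast
      refine Finset.sum_congr rfl fun b _ => ?_
      simp [proj, Matrix.vecMulVec_apply, Complex.mul_conj]]
  ring

lemma key_identity (k : ℕ) (c : Fin k → ℝ) (ψ : Fin k → (Fin dA → ℂ))
    (φ : Fin k → (Fin d → ℂ)) :
    trB (∑ i, (c i : ℂ) • (proj (ψ i) ⊗ₖ proj (φ i))) ⊗ₖ (1 : Matrix (Fin d) (Fin d) ℂ)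
      - (∑ i, (c i : ℂ) • (proj (ψ i) ⊗ₖ proj (φ i)))
    = ∑ i, (c i : ℂ) • (proj (ψ i) ⊗ₖ
        (((∑ b, Complex.normSq (φ i b) : ℝ) : ℂ) • (1 : Matrix (Fin d) (Fin d) ℂ)
          - proj (φ i))) := by
  rw [trB_decomp]
  ext ⟨a, b⟩ ⟨a', b'⟩
  simp only [Matrix.sub_apply, Matrix.sum_apply, Matrix.smul_apply, Matrix.kroneckerMap_apply,
    smul_eq_mul, Matrix.one_apply]
  rw [Finset.sum_mul, ← Finset.sum_sub_distrib]
  refine Finset.sum_congr rfl fun i _ => ?_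
  ring


/-- symmetric vectors are fixed by the row action of `symProj`. -/
lemma sum_prod_symProj (M : ℕ) (χ : Fin d → ℂ) (g : Fin M → Fin d) :
    ∑ f : Fin M → Fin d, (∏ j, χ (f j)) * symProj d M f g = ∏ j, χ (g j) := by
  classical
  have hfac : (M.factorial : ℂ) ≠ 0 := Nat.cast_ne_zero.mpr (Nat.factorial_ne_zero M)
  have hentry : ∀ f, symProj d M f g = (M.factorial : ℂ)⁻¹ *
      ∑ π : Equiv.Perm (Fin M), if (fun i => g (π i)) = f then (1:ℂ) else 0 := by
    intro f
    rw [symProj, Matrix.smul_apply, Matrix.sum_apply]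
    simp only [Matrix.of_apply, smul_eq_mul]
  have h3 : ∑ f : Fin M → Fin d, (∏ j, χ (f j)) * symProj d M f g
      = (M.factorial : ℂ)⁻¹ * ∑ f : Fin M → Fin d, (∏ j, χ (f j)) *
          ∑ π : Equiv.Perm (Fin M), if (fun i => g (π i)) = f then (1:ℂ) else 0 := by
    rw [Finset.mul_sum]
    refine Finset.sum_congr rfl fun f _ => ?_
    rw [hentry f]
    ring
  have h5 : ∑ f : Fin M → Fin d, (∏ j, χ (f j)) *
        ∑ π : Equiv.Perm (Fin M), (if (fun i => g (π i)) = f then (1:ℂ) else 0)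
      = ∑ π : Equiv.Perm (Fin M), ∑ f : Fin M → Fin d,
          (∏ j, χ (f j)) * if (fun i => g (π i)) = f then (1:ℂ) else 0 := by
    simp only [Finset.mul_sum]
    exact Finset.sum_comm
  have hπ : ∀ π : Equiv.Perm (Fin M),
      (∑ f : Fin M → Fin d, (∏ j, χ (f j)) * if (fun i => g (π i)) = f then (1:ℂ) else 0)
        = ∏ j, χ (g j) := by
    intro π
    rw [Finset.sum_eq_single (fun i => g (π i))]
    · rw [if_pos rfl, mul_one]
      exact Equiv.prod_comp π (fun j => χ (g j))
    · intro f _ hf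
      rw [if_neg (Ne.symm hf), mul_zero]
    · intro h; exact absurd (Finset.mem_univ _) h
  rw [h3, h5]
  simp only [hπ, Finset.sum_const, Finset.card_univ, Fintype.card_perm, Fintype.card_fin,
    nsmul_eq_mul]
  rw [← mul_assoc, inv_mul_cancel₀ hfac, one_mul]

/-- `Φ` built from `φ` as a product over all `N` tensor factors. -/
def bigPhi (d N : ℕ) (φ : Fin d → ℂ) : (Fin d × (Fin (N - 1) → Fin d)) → ℂ :=
  fun p => φ p.1 * ∏ j, φ (p.2 j)

lemma bigPhi_eq_prod (φ : Fin d → ℂ) (p : Fin d × (Fin (N - 1) → Fin d)) :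
    bigPhi d N φ p = ∏ j : Fin (N - 1 + 1), φ (bEquiv d N p j) := by
  rw [Fin.prod_univ_succ]
  rfl

lemma proj_mul_symProjB (φ : Fin d → ℂ) :
    proj (bigPhi d N φ) * symProjB d N = proj (bigPhi d N φ) := by
  classical
  ext p q
  rw [Matrix.mul_apply]
  have key : ∑ r, star (bigPhi d N φ) r * symProjB d N r q
      = star (bigPhi d N φ) q := by
    rw [← Equiv.sum_comp (bEquiv d N).symm
      (fun r => star (bigPhi d N φ) r * symProjB d N r q)]
    have h1 : ∀ f : Fin (N - 1 + 1) → Fin d,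
        star (bigPhi d N φ) ((bEquiv d N).symm f) = ∏ j, (starRingEnd ℂ) (φ (f j)) := by
      intro f
      rw [Pi.star_apply, RCLike.star_def, ← map_prod]
      congr 1
      rw [bigPhi_eq_prod]
      simp
    have h2 : ∀ f, symProjB d N ((bEquiv d N).symm f) q
        = symProj d (N - 1 + 1) f (bEquiv d N q) := by
      intro f
      simp [symProjB, Matrix.reindex_apply, Matrix.submatrix_apply]
    calc ∑ f : Fin (N - 1 + 1) → Fin d,
          star (bigPhi d N φ) ((bEquiv d N).symm f) * symProjB d N ((bEquiv d N).symm f) q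
        = ∑ f : Fin (N - 1 + 1) → Fin d,
            (∏ j, (starRingEnd ℂ) (φ (f j))) * symProj d (N - 1 + 1) f (bEquiv d N q) := by
          refine Finset.sum_congr rfl fun f _ => ?_
          rw [h1, h2]
      _ = ∏ j, (starRingEnd ℂ) (φ (bEquiv d N q j)) :=
          sum_prod_symProj (N - 1 + 1) (fun b => (starRingEnd ℂ) (φ b)) (bEquiv d N q)
      _ = star (bigPhi d N φ) q := by
          rw [Pi.star_apply, RCLike.star_def, ← map_prod]
          congr 1
          exact (bigPhi_eq_prod φ q).symm
  calc ∑ r, proj (bigPhi d N φ) p r * symProjB d N r q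
      = bigPhi d N φ p * ∑ r, star (bigPhi d N φ) r * symProjB d N r q := by
        rw [Finset.mul_sum]
        refine Finset.sum_congr rfl fun r _ => ?_
        rw [show proj (bigPhi d N φ) p r = bigPhi d N φ p * star (bigPhi d N φ) r from rfl]
        ring
    _ = proj (bigPhi d N φ) p q := by rw [key]; rfl

lemma ptraceExt_proj (ψ : Fin dA → ℂ) (φ : Fin d → ℂ) :
    ptraceExt (N := N) (proj ψ ⊗ₖ proj (bigPhi d N φ))
      = (((∑ b, Complex.normSq (φ b)) ^ (N - 1) : ℝ) : ℂ) • (proj ψ ⊗ₖ proj φ) := by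
  classical
  ext p q
  simp only [ptraceExt, Matrix.kroneckerMap_apply, Matrix.smul_apply, smul_eq_mul]
  have hterm : ∀ g : Fin (N - 1) → Fin d,
      proj (bigPhi d N φ) (p.2, g) (q.2, g)
        = proj φ p.2 q.2 * ∏ j, (Complex.normSq (φ (g j)) : ℂ) := by
    intro g
    show (bigPhi d N φ (p.2, g)) * star (bigPhi d N φ (q.2, g)) = _
    simp only [bigPhi, star_mul', RCLike.star_def, map_prod]
    have hp : ∏ x, φ (g x) * (starRingEnd ℂ) (φ (g x))
        = ∏ j, (Complex.normSq (φ (g j)) : ℂ) :=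
      Finset.prod_congr rfl fun j _ => Complex.mul_conj _
    calc (φ p.2 * ∏ x, φ (g x)) * ((starRingEnd ℂ) (φ q.2) * ∏ x, (starRingEnd ℂ) (φ (g x)))
        = (φ p.2 * (starRingEnd ℂ) (φ q.2)) *
            ∏ x, φ (g x) * (starRingEnd ℂ) (φ (g x)) := by
          rw [Finset.prod_mul_distrib]; ring
      _ = proj φ p.2 q.2 * ∏ j, (Complex.normSq (φ (g j)) : ℂ) := by
          rw [hp]; rfl
  have hsum : ∑ g : Fin (N - 1) → Fin d, ∏ j, (Complex.normSq (φ (g j)) : ℂ)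
      = (((∑ b, Complex.normSq (φ b)) ^ (N - 1) : ℝ) : ℂ) := by
    rw [show (((∑ b, Complex.normSq (φ b)) ^ (N - 1) : ℝ) : ℂ)
        = (∑ b, ((Complex.normSq (φ b) : ℝ) : ℂ)) ^ (N - 1) by push_cast; rfl,
      Fintype.sum_pow]
  calc ∑ g : Fin (N - 1) → Fin d, proj ψ p.1 q.1 * proj (bigPhi d N φ) (p.2, g) (q.2, g)
      = proj ψ p.1 q.1 * (proj φ p.2 q.2 *
          ∑ g : Fin (N - 1) → Fin d, ∏ j, (Complex.normSq (φ (g j)) : ℂ)) := by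
        rw [Finset.mul_sum, Finset.mul_sum]
        refine Finset.sum_congr rfl fun g _ => ?_
        rw [hterm g]
    _ = _ := by rw [hsum]; ring

theorem memSN_of_separable (hN : 1 ≤ N)
    {ρ : Matrix (Fin dA × Fin d) (Fin dA × Fin d) ℂ} (h : IsSeparable dA d ρ) :
    MemSN dA d N ρ := by
  classical
  obtain ⟨k, c, ψ, φ, hc, hρ⟩ := h
  set t : Fin k → ℝ := fun i => ∑ b, Complex.normSq (φ i b) with ht
  set e : Fin k → ℝ := fun i => if φ i = 0 then 0 else c i * ((t i)⁻¹) ^ (N - 1) with he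
  have htnn : ∀ i, 0 ≤ t i := fun i => Finset.sum_nonneg fun b _ => Complex.normSq_nonneg _
  have htpos : ∀ i, φ i ≠ 0 → 0 < t i := by
    intro i hne
    obtain ⟨b, hb⟩ := Function.ne_iff.mp hne
    exact Finset.sum_pos' (fun b' _ => Complex.normSq_nonneg _)
      ⟨b, Finset.mem_univ b, Complex.normSq_pos.mpr hb⟩
  have henn : ∀ i, 0 ≤ e i := by
    intro i
    rw [he]
    dsimp only
    split
    · exact le_refl 0
    · exact mul_nonneg (hc i) (pow_nonneg (inv_nonneg.mpr (htnn i)) _)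
  refine ⟨∑ i, ((e i : ℝ) : ℂ) • (proj (ψ i) ⊗ₖ proj (bigPhi d N (φ i))), ?_, ?_, ?_⟩
  · refine posSemidef_sum _ _ fun i _ => ?_
    refine posSemidef_smul_real ?_ (henn i)
    have : proj (ψ i) ⊗ₖ proj (bigPhi d N (φ i))
        = proj (fun p : ExtIdx dA d N => ψ i p.1 * bigPhi d N (φ i) p.2) := by
      ext ⟨a, r⟩ ⟨a', r'⟩
      show proj (ψ i) a a' * proj (bigPhi d N (φ i)) r r' = _
      show _ = (ψ i a * bigPhi d N (φ i) r) * star (ψ i a' * bigPhi d N (φ i) r')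
      rw [show proj (ψ i) a a' = ψ i a * star (ψ i a') from rfl,
        show proj (bigPhi d N (φ i)) r r' = bigPhi d N (φ i) r * star (bigPhi d N (φ i) r')
          from rfl, star_mul']
      ring
    rw [this]
    exact proj_posSemidef _
  · rw [hρ]
    have hlin : ptraceExt (N := N) (∑ i, ((e i : ℝ) : ℂ) • (proj (ψ i) ⊗ₖ proj (bigPhi d N (φ i))))
        = ∑ i, ((e i : ℝ) : ℂ) • ptraceExt (N := N) (proj (ψ i) ⊗ₖ proj (bigPhi d N (φ i))) := by
      ext p q
      simp only [ptraceExt, Matrix.sum_apply, Matrix.smul_apply, smul_eq_mul, Finset.mul_sum]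
      rw [Finset.sum_comm]
    rw [hlin]
    refine Finset.sum_congr rfl fun i _ => ?_
    rw [ptraceExt_proj]
    rw [smul_smul]
    by_cases hzero : φ i = 0
    · have h1 : e i = 0 := by rw [he]; simp [hzero]
      have h2 : proj (φ i) = 0 := by
        ext b b'
        rw [show proj (φ i) b b' = φ i b * star (φ i b') from rfl, hzero]
        simp
      rw [h1, h2]
      simp [Matrix.kroneckerMap_zero_right]
    · have h1 : e i = c i * ((t i)⁻¹) ^ (N - 1) := by rw [he]; simp [hzero]
      rw [h1]
      congr 1
      rw [← Complex.ofReal_mul]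
      congr 1
      rw [mul_assoc, ← mul_pow, inv_mul_cancel₀ (ne_of_gt (htpos i hzero)), one_pow, mul_one]
  · rw [Finset.sum_mul]
    refine Finset.sum_congr rfl fun i _ => ?_
    rw [smul_mul_assoc]
    congr 1
    rw [show proj (ψ i) ⊗ₖ proj (bigPhi d N (φ i)) * ((1 : Matrix (Fin dA) (Fin dA) ℂ) ⊗ₖ symProjB d N)
      = (proj (ψ i) * 1) ⊗ₖ (proj (bigPhi d N (φ i)) * symProjB d N) from
        (Matrix.mul_kronecker_mul _ _ _ _).symm]
    rw [Matrix.mul_one, proj_mul_symProjB]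


lemma trace_trB {dA d : ℕ} (M : Matrix (Fin dA × Fin d) (Fin dA × Fin d) ℂ) :
    (trB M).trace = M.trace := by
  simp [trB, Matrix.trace, Matrix.diag, Fintype.sum_prod_type]

lemma sep_posSemidef {dA d : ℕ} {ρ : Matrix (Fin dA × Fin d) (Fin dA × Fin d) ℂ}
    (h : IsSeparable dA d ρ) : ρ.PosSemidef := by
  obtain ⟨k, c, ψ, φ, hc, rfl⟩ := h
  exact posSemidef_sum _ _ fun i _ => posSemidef_smul_real
    (posSemidef_kronecker (proj_posSemidef _) (proj_posSemidef _)) (hc i)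

lemma sep_reduction_psd {dA d : ℕ} {ρ : Matrix (Fin dA × Fin d) (Fin dA × Fin d) ℂ}
    (h : IsSeparable dA d ρ) :
    (trB ρ ⊗ₖ (1 : Matrix (Fin d) (Fin d) ℂ) - ρ).PosSemidef := by
  obtain ⟨k, c, ψ, φ, hc, rfl⟩ := h
  rw [key_identity]
  exact posSemidef_sum _ _ fun i _ => posSemidef_smul_real
    (posSemidef_kronecker (proj_posSemidef _) (sub_proj_posSemidef _)) (hc i)

/-- every separable state is within trace-norm distance
`2(d-1)/(N+d)` of a normalized element of `𝒮̃^N`; concretely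
`σ = (N/(N+d)) ρ + (1/(N+d)) ρ_A ⊗ 𝕀_B` works. -/
theorem stmt0 (dA d N : ℕ) (hdA : 1 ≤ dA) (hd : 1 ≤ d) (hN : 1 ≤ N)
    (ρ : Matrix (Fin dA × Fin d) (Fin dA × Fin d) ℂ)
    (hρsep : IsSeparable dA d ρ) (hρtr : ρ.trace = 1) :
    ∃ σ : Matrix (Fin dA × Fin d) (Fin dA × Fin d) ℂ,
      σ = ((N : ℂ) / ((N : ℂ) + d)) • ρ +
          (1 / ((N : ℂ) + d)) • (trB ρ ⊗ₖ (1 : Matrix (Fin d) (Fin d) ℂ)) ∧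
      MemStildeN dA d N σ ∧ σ.trace = 1 ∧
      traceNorm (ρ - σ) ≤ 2 * ((d : ℝ) - 1) / ((N : ℝ) + d) := by
  classical
  have hdR : (1:ℝ) ≤ (d:ℝ) := by exact_mod_cast hd
  have hNR : (0:ℝ) ≤ (N:ℝ) := Nat.cast_nonneg N
  have hrpos : (0:ℝ) < (N:ℝ) + (d:ℝ) := by linarith
  have hrne : ((N:ℝ) + (d:ℝ)) ≠ 0 := ne_of_gt hrpos
  have hne : ((N:ℂ) + (d:ℂ)) ≠ 0 := by
    have : (((N:ℝ) + (d:ℝ) : ℝ) : ℂ) ≠ 0 := Complex.ofReal_ne_zero.mpr hrne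
    push_cast at this
    exact this
  set K : Matrix (Fin dA × Fin d) (Fin dA × Fin d) ℂ :=
    trB ρ ⊗ₖ (1 : Matrix (Fin d) (Fin d) ℂ) with hKdef
  set σ : Matrix (Fin dA × Fin d) (Fin dA × Fin d) ℂ :=
    ((N : ℂ) / ((N : ℂ) + d)) • ρ + (1 / ((N : ℂ) + d)) • K with hσdef
  have hKtr : K.trace = (d : ℂ) := by
    rw [hKdef, Matrix.trace_kronecker, trace_trB, hρtr, one_mul, Matrix.trace_one]
    simp
  have hσtr : σ.trace = 1 := by
    rw [hσdef, Matrix.trace_add, Matrix.trace_smul, Matrix.trace_smul, hρtr, hKtr,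
      smul_eq_mul, smul_eq_mul, mul_one]
    field_simp
  refine ⟨σ, rfl, ⟨ρ, memSN_of_separable hN hρsep, rfl⟩, hσtr, ?_⟩
  -- the trace-norm bound
  set Q : Matrix (Fin dA × Fin d) (Fin dA × Fin d) ℂ :=
    (((1/((N:ℝ) + (d:ℝ))) : ℝ) : ℂ) • (K - ρ) with hQdef
  have hQpsd : Q.PosSemidef :=
    posSemidef_smul_real (sep_reduction_psd hρsep) (div_nonneg zero_le_one (le_of_lt hrpos))
  have hZQeq : (ρ - σ) + Q = ((((d:ℝ) - 1)/((N:ℝ) + (d:ℝ)) : ℝ) : ℂ) • ρ := by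
    rw [hσdef, hQdef, smul_sub]
    push_cast
    match_scalars
    · field_simp
      ring
    · field_simp
      ring
  have hZQpsd : (((((d:ℝ) - 1)/((N:ℝ) + (d:ℝ)) : ℝ) : ℂ) • ρ).PosSemidef :=
    posSemidef_smul_real (sep_posSemidef hρsep) (div_nonneg (by linarith) (le_of_lt hrpos))
  have hZherm : (ρ - σ).IsHermitian := by
    have h := (hZQeq ▸ hZQpsd).1.sub hQpsd.1
    rwa [add_sub_cancel_right] at h
  have hbound := traceNorm_le_of_psd_add (ρ - σ) Q hZherm hQpsd (hZQeq ▸ hZQpsd)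
  have htrZ : ((ρ - σ).trace).re = 0 := by
    rw [Matrix.trace_sub, hρtr, hσtr]
    simp
  have htrQ : (Q.trace).re = ((d:ℝ) - 1)/((N:ℝ) + (d:ℝ)) := by
    rw [hQdef, Matrix.trace_smul, Matrix.trace_sub, hKtr, hρtr, smul_eq_mul]
    rw [show (d:ℂ) - 1 = (((d:ℝ) - 1 : ℝ) : ℂ) by push_cast; ring]
    rw [← Complex.ofReal_mul, Complex.ofReal_re]
    ring
  rw [htrZ, htrQ] at hbound
  calc traceNorm (ρ - σ) ≤ 0 + 2 * (((d:ℝ) - 1)/((N:ℝ) + (d:ℝ))) := hbound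
    _ = 2 * ((d : ℝ) - 1) / ((N : ℝ) + d) := by ring


end SepPaper
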